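/- Suppose G_1, …, G_m are finite subgraphs of the infinite path Path_ℤ with G_1 ∪ ⋯ ∪ G_m = Path_k (k ≥ 1), and let g := gap(G_1,…,G_m). Then there exists a shift permutation σ of {1,…,m} such that λ⃗(G_{σ(1)},…,G_{σ(m)}) ≥ (g − max_{j∈{1,…,m}} λ(G_j))/2. -/

import Mathlib

noncomputable section

/-- A finite subgraph of the infinite path `Path_ℤ`, identified with its (finite) edge set:
the integer `i` encodes the edge `{i-1, i}` of `Path_ℤ`. -/
abbrev PGraph := Finset ℤ

/-- The connected component of the edge `i` in `G`: all edges `j ∈ G` such that every edge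
lying between `i` and `j` also belongs to `G`. -/
def comp (G : PGraph) (i : ℤ) : PGraph :=
  G.filter fun j => ∀ l ∈ Finset.Icc (min i j) (max i j), l ∈ G

/-- `Δ(G)`: the number of connected components of `G`. -/
def Delta (G : PGraph) : ℕ := (G.filter fun i => i - 1 ∉ G).card

/-- `λ(G)`: the maximum number of edges of a connected component of `G`. -/
def lam (G : PGraph) : ℕ := G.sup fun i => (comp G i).card

/-- `G ⊖ F`: the union of the connected components of `G` that are vertex-disjoint from `F`.
(The edges `{i-1,i}` and `{f-1,f}` share a vertex iff `|i - f| ≤ 1`.) -/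
def ominus (G F : PGraph) : PGraph :=
  G.filter fun i => ∀ j ∈ comp G i, ∀ f ∈ F, 1 < (j - f).natAbs

/-- `Path_k`: the subgraph of `Path_ℤ` with edges `{i-1,i}` for `1 ≤ i ≤ k`. -/
def pathk (k : ℕ) : PGraph := Finset.Icc 1 (k : ℤ)

/-- `Δ⃗(G_1,…,G_m ∣ F)`. -/
def dvecFrom : PGraph → List PGraph → ℕ
  | _, [] => 0
  | F, G :: L => Delta (ominus G F) + dvecFrom (F ∪ G) L

/-- `Δ⃗(G_1,…,G_m)`. -/
def dvec (L : List PGraph) : ℕ := dvecFrom ∅ L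

def lvecFrom : PGraph → List PGraph → ℕ
  | _, [] => 0
  | F, G :: L => lam (ominus G F) + lvecFrom (F ∪ G) L

/-- `λ⃗(G_1,…,G_m)`. -/
def lvec (L : List PGraph) : ℕ := lvecFrom ∅ L

def ldvecFrom : PGraph → List PGraph → ℕ
  | _, [] => 0
  | F, G :: L => lam (ominus G F) * Delta (ominus G F) + ldvecFrom (F ∪ G) L

/-- `λΔ⃗(G_1,…,G_m)`. -/
def ldvec (L : List PGraph) : ℕ := ldvecFrom ∅ L

/-- The sequence `G_1, …, G_m` as a list. -/
def seqList {m : ℕ} (G : Fin m → PGraph) : List PGraph := (List.finRange m).map G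

/-- `G_1 ∪ ⋯ ∪ G_{j-1}` (the union of the entries strictly before `j`). -/
def unionBelow {m : ℕ} (G : Fin m → PGraph) (j : Fin m) : PGraph :=
  (Finset.univ.filter fun i => i < j).biUnion G

/-- A shift permutation: `σ(j) ≥ j - 1` for all `j`. -/
def IsShiftPerm {m : ℕ} (σ : Equiv.Perm (Fin m)) : Prop :=
  ∀ j : Fin m, (j : ℕ) ≤ (σ j : ℕ) + 1

/-- The midpoint `(s+t)/2` (as a real number) of the connected component `Path_{s,t}` of `H`
containing the edge `i`. -/
def midpt (H : PGraph) (i : ℤ) : ℝ :=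
  (((WithTop.untopD i (comp H i).min : ℤ) : ℝ) - 1 +
    ((WithBot.unbotD i (comp H i).max : ℤ) : ℝ)) / 2

/-- The union `⋃_{j=1}^m (G_j ⊖ (G_1 ∪ ⋯ ∪ G_{j-1}))`. -/
def residUnion {m : ℕ} (G : Fin m → PGraph) : PGraph :=
  Finset.univ.biUnion fun j => ominus (G j) (unionBelow G j)

/-- The largest distance from a point of the real interval `[0,k]` to the nearest midpoint of a
connected component of `H`. -/
def gapOf (k : ℕ) (H : PGraph) : ℝ :=
  ⨆ y : Set.Icc (0 : ℝ) (k : ℝ), sInf ((fun i => |midpt H i - (y : ℝ)|) '' (H : Set ℤ))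

/-- `gap(G_1,…,G_m)` for a covering `G_1 ∪ ⋯ ∪ G_m = Path_k`. -/
def gapSeq (k : ℕ) {m : ℕ} (G : Fin m → PGraph) : ℝ := gapOf k (residUnion G)

lemma mem_comp {G : PGraph} {i j : ℤ} :
    j ∈ comp G i ↔ j ∈ G ∧ ∀ l, min i j ≤ l → l ≤ max i j → l ∈ G := by
  simp only [comp, Finset.mem_filter, Finset.mem_Icc, and_imp]

lemma comp_subset {G : PGraph} {i : ℤ} : comp G i ⊆ G := Finset.filter_subset _ _

lemma mem_comp_self {G : PGraph} {i : ℤ} (h : i ∈ G) : i ∈ comp G i := by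
  rw [mem_comp]
  exact ⟨h, fun l h1 h2 => by have : l = i := by omega
                              rwa [this]⟩

lemma comp_interval {G : PGraph} {i x y z : ℤ} (hx : x ∈ comp G i) (hz : z ∈ comp G i)
    (h1 : x ≤ y) (h2 : y ≤ z) : y ∈ comp G i := by
  rw [mem_comp] at hx hz ⊢
  obtain ⟨hxG, hxI⟩ := hx
  obtain ⟨hzG, hzI⟩ := hz
  have key : ∀ l, min i y ≤ l → l ≤ max i y → l ∈ G := by
    intro l hl1 hl2
    rcases (by omega : (min i x ≤ l ∧ l ≤ max i x) ∨ (min i z ≤ l ∧ l ≤ max i z)) with h | h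
    · exact hxI l h.1 h.2
    · exact hzI l h.1 h.2
  exact ⟨key y (by omega) (by omega), key⟩

lemma comp_congr {G : PGraph} {i j : ℤ} (h : j ∈ comp G i) : comp G j = comp G i := by
  rw [mem_comp] at h
  obtain ⟨hjG, hjI⟩ := h
  ext l
  rw [mem_comp, mem_comp]
  constructor
  · rintro ⟨hlG, hlI⟩
    refine ⟨hlG, fun x h1 h2 => ?_⟩
    rcases (by omega : (min i j ≤ x ∧ x ≤ max i j) ∨ (min j l ≤ x ∧ x ≤ max j l)) with h | h
    · exact hjI x h.1 h.2
    · exact hlI x h.1 h.2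
  · rintro ⟨hlG, hlI⟩
    refine ⟨hlG, fun x h1 h2 => ?_⟩
    rcases (by omega : (min i j ≤ x ∧ x ≤ max i j) ∨ (min i l ≤ x ∧ x ≤ max i l)) with h | h
    · exact hjI x h.1 h.2
    · exact hlI x h.1 h.2

lemma comp_nonempty {G : PGraph} {i : ℤ} (h : i ∈ G) : (comp G i).Nonempty :=
  ⟨i, mem_comp_self h⟩

lemma comp_eq_Icc {G : PGraph} {i : ℤ} (h : i ∈ G) :
    comp G i = Finset.Icc ((comp G i).min' (comp_nonempty h)) ((comp G i).max' (comp_nonempty h)) := by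
  apply Finset.Subset.antisymm
  · intro x hx
    exact Finset.mem_Icc.mpr ⟨Finset.min'_le _ _ hx, Finset.le_max' _ _ hx⟩
  · intro x hx
    rw [Finset.mem_Icc] at hx
    exact comp_interval (Finset.min'_mem _ _) (Finset.max'_mem _ _) hx.1 hx.2

lemma dist_le_of_mem_comp {G : PGraph} {i x y : ℤ} (hx : x ∈ comp G i) (hy : y ∈ comp G i) :
    (x - y).natAbs + 1 ≤ (comp G i).card := by
  have hi : i ∈ G := (mem_comp.mp hx).2 i (by omega) (by omega)
  rw [comp_eq_Icc hi] at hx hy ⊢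
  rw [Finset.mem_Icc] at hx hy
  rw [Int.card_Icc]
  omega

lemma comp_mono {R S : PGraph} {i : ℤ} (h : R ⊆ S) : comp R i ⊆ comp S i := by
  intro j hj
  rw [mem_comp] at hj ⊢
  exact ⟨h hj.1, fun l h1 h2 => h (hj.2 l h1 h2)⟩

lemma mem_ominus {G F : PGraph} {i : ℤ} :
    i ∈ ominus G F ↔ i ∈ G ∧ ∀ j ∈ comp G i, ∀ f ∈ F, 1 < (j - f).natAbs :=
  Finset.mem_filter

lemma ominus_subset {G F : PGraph} : ominus G F ⊆ G := Finset.filter_subset _ _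

lemma comp_subset_ominus {G F : PGraph} {e : ℤ} (he : e ∈ G)
    (hd : ∀ c ∈ comp G e, ∀ f ∈ F, 1 < (c - f).natAbs) : comp G e ⊆ ominus G F := by
  intro l hl
  rw [mem_ominus]
  refine ⟨comp_subset hl, ?_⟩
  rw [comp_congr hl]
  exact hd

lemma comp_ominus_eq {G F : PGraph} {e : ℤ} (he : e ∈ G)
    (hd : ∀ c ∈ comp G e, ∀ f ∈ F, 1 < (c - f).natAbs) : comp (ominus G F) e = comp G e := by
  apply Finset.Subset.antisymm (comp_mono ominus_subset)
  intro l hl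
  rw [mem_comp]
  refine ⟨comp_subset_ominus he hd hl, fun x h1 h2 => ?_⟩
  apply comp_subset_ominus he hd
  rcases le_total e l with h | h
  · exact comp_interval (mem_comp_self he) hl (by omega) (by omega)
  · exact comp_interval hl (mem_comp_self he) (by omega) (by omega)

lemma card_comp_le_lam {G : PGraph} {e : ℤ} (he : e ∈ G) : (comp G e).card ≤ lam G :=
  Finset.le_sup (f := fun i => (comp G i).card) he

lemma card_comp_le_lam_ominus {G F : PGraph} {e : ℤ} (he : e ∈ G)
    (hd : ∀ c ∈ comp G e, ∀ f ∈ F, 1 < (c - f).natAbs) :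
    (comp G e).card ≤ lam (ominus G F) := by
  have he' : e ∈ ominus G F := comp_subset_ominus he hd (mem_comp_self he)
  calc (comp G e).card = (comp (ominus G F) e).card := by rw [comp_ominus_eq he hd]
  _ ≤ lam (ominus G F) := card_comp_le_lam he'
section Indexed

variable {m : ℕ} (G : Fin m → PGraph)

def Gext : ℕ → PGraph := fun n => if h : n < m then G ⟨n, h⟩ else ∅

def Abelow (t : ℕ) : PGraph := (Finset.univ.filter fun i : Fin m => (i : ℕ) < t).biUnion G

variable {G}

lemma mem_Abelow {t : ℕ} {x : ℤ} : x ∈ Abelow G t ↔ ∃ i : Fin m, (i : ℕ) < t ∧ x ∈ G i := by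
  simp [Abelow]

lemma unionBelow_eq (j : Fin m) : unionBelow G j = Abelow G (j : ℕ) := by
  ext x
  simp only [unionBelow, Abelow, Finset.mem_biUnion, Finset.mem_filter, Finset.mem_univ, true_and]
  exact exists_congr fun i => by rw [Fin.lt_def]

lemma Gext_eq (j : Fin m) : Gext G (j : ℕ) = G j := by
  simp [Gext]

lemma Abelow_zero : Abelow G 0 = ∅ := by
  ext x; simp [mem_Abelow]

lemma Abelow_succ (s : ℕ) : Abelow G (s + 1) = Abelow G s ∪ Gext G s := by
  ext x
  simp only [mem_Abelow, Finset.mem_union, Gext]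
  constructor
  · rintro ⟨i, hi, hx⟩
    rcases Nat.lt_or_ge (i : ℕ) s with h | h
    · exact Or.inl ⟨i, h, hx⟩
    · have : (i : ℕ) = s := by omega
      right
      rw [dif_pos (this ▸ i.isLt)]
      convert hx using 2
      exact Fin.ext this.symm
  · rintro (⟨i, hi, hx⟩ | hx)
    · exact ⟨i, by omega, hx⟩
    · by_cases h : s < m
      · rw [dif_pos h] at hx
        exact ⟨⟨s, h⟩, by simp, hx⟩
      · rw [dif_neg h] at hx
        simp at hx

lemma mem_residUnion {z : ℤ} :
    z ∈ residUnion G ↔ ∃ j, z ∈ ominus (G j) (unionBelow G j) := by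
  simp [residUnion]

lemma comp_residUnion_eq {z : ℤ} {j : Fin m} (hz : z ∈ ominus (G j) (unionBelow G j)) :
    comp (residUnion G) z = comp (G j) z := by
  obtain ⟨hzG, hcond⟩ := mem_ominus.mp hz
  have hsub : comp (G j) z ⊆ comp (residUnion G) z := by
    have h1 : comp (G j) z ⊆ residUnion G := by
      intro l hl
      exact mem_residUnion.mpr ⟨j, comp_subset_ominus hzG hcond hl⟩
    intro l hl
    rw [mem_comp]
    refine ⟨h1 hl, fun x h1' h2' => ?_⟩
    apply h1
    rcases le_total z l with h | h
    · exact comp_interval (mem_comp_self hzG) hl (by omega) (by omega)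
    · exact comp_interval hl (mem_comp_self hzG) (by omega) (by omega)
  apply Finset.Subset.antisymm _ hsub
  -- key: boundary argument
  set C := comp (G j) z with hC
  have hne : C.Nonempty := comp_nonempty hzG
  set a := C.min' hne with ha
  set b := C.max' hne with hb
  have hIcc : C = Finset.Icc a b := comp_eq_Icc hzG
  have hzab : a ≤ z ∧ z ≤ b := by
    have := mem_comp_self hzG
    rw [← hC] at this
    exact ⟨Finset.min'_le _ _ this, Finset.le_max' _ _ this⟩
  have haC : a ∈ C := Finset.min'_mem _ _
  have hbC : b ∈ C := Finset.max'_mem _ _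
  -- b+1 ∉ residUnion and a-1 ∉ residUnion
  have hbdry : ∀ w : ℤ, w ∈ C → (w + 1 ∈ residUnion G → w + 1 ∈ C) ∧
      (w - 1 ∈ residUnion G → w - 1 ∈ C) := by
    intro w hwC
    constructor
    all_goals {
      intro hmem
      obtain ⟨j', hj'⟩ := mem_residUnion.mp hmem
      obtain ⟨hG', hcond'⟩ := mem_ominus.mp hj'
      rcases lt_trichotomy j' j with hlt | heq | hgt
      · -- j' < j : w's condition contradicted
        exfalso
        have : (1 : ℕ) < ((w : ℤ) - (w + 1)).natAbs ∨ (1:ℕ) < ((w:ℤ) - (w-1)).natAbs := by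
          first
          | exact Or.inl (hcond w hwC _ ((unionBelow_eq j) ▸ mem_Abelow.mpr ⟨j', Fin.lt_def.mp hlt, hG'⟩))
          | exact Or.inr (hcond w hwC _ ((unionBelow_eq j) ▸ mem_Abelow.mpr ⟨j', Fin.lt_def.mp hlt, hG'⟩))
        omega
      · -- same graph: extendability
        subst heq
        rw [mem_comp] at hwC ⊢
        refine ⟨hG', fun x h1 h2 => ?_⟩
        by_cases hx : min z w ≤ x ∧ x ≤ max z w
        · exact hwC.2 x hx.1 hx.2
        · have : x = w + 1 ∨ x = w - 1 := by omega
          rcases this with rfl | rfl <;> first | exact hG' | (exfalso; omega)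
      · -- j' > j : (w±1)'s condition contradicted
        exfalso
        have h1 := hcond' _ (mem_comp_self hG') w
          ((unionBelow_eq j') ▸ mem_Abelow.mpr ⟨j, Fin.lt_def.mp hgt, comp_subset hwC⟩)
        omega
    }
  intro l hl
  rw [hIcc, Finset.mem_Icc]
  by_contra hcon
  push_neg at hcon
  -- l > b or l < a
  rcases (by omega : b + 1 ≤ l ∧ a ≤ l ∨ l ≤ a - 1 ∧ l ≤ b) with ⟨h1, _⟩ | ⟨h1, _⟩
  · have hb1 : b + 1 ∈ comp (residUnion G) z := by
      apply comp_interval (hsub (mem_comp_self hzG)) hl (by omega) h1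
    have := (hbdry b hbC).1 (comp_subset hb1)
    rw [hIcc, Finset.mem_Icc] at this
    have := this
    omega
  · have ha1 : a - 1 ∈ comp (residUnion G) z := by
      apply comp_interval hl (hsub (mem_comp_self hzG)) h1 (by omega)
    have := (hbdry a haC).2 (comp_subset ha1)
    rw [hIcc, Finset.mem_Icc] at this
    omega

lemma card_comp_residUnion_le {z : ℤ} (hz : z ∈ residUnion G) :
    (comp (residUnion G) z).card ≤ Finset.univ.sup fun j => lam (G j) := by
  obtain ⟨j, hj⟩ := mem_residUnion.mp hz
  rw [comp_residUnion_eq hj]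
  calc (comp (G j) z).card ≤ lam (G j) := card_comp_le_lam (ominus_subset hj)
  _ ≤ _ := Finset.le_sup (f := fun j => lam (G j)) (Finset.mem_univ j)

end Indexed
def unionL : List PGraph → PGraph
  | [] => ∅
  | x :: l => x ∪ unionL l

lemma lvecFrom_append (l₂ : List PGraph) : ∀ (l₁ : List PGraph) (F : PGraph),
    lvecFrom F (l₁ ++ l₂) = lvecFrom F l₁ + lvecFrom (F ∪ unionL l₁) l₂
  | [], F => by simp [lvecFrom, unionL]
  | x :: l₁, F => by
    have ih := lvecFrom_append l₂ l₁ (F ∪ x)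
    show lam (ominus x F) + lvecFrom (F ∪ x) (l₁ ++ l₂) = _
    rw [ih]
    show _ = lam (ominus x F) + lvecFrom (F ∪ x) l₁ + lvecFrom (F ∪ (x ∪ unionL l₁)) l₂
    rw [← Finset.union_assoc]
    omega

def fseq (m : ℕ) : ℕ → List (ℕ × ℕ × ℤ) → List ℕ
  | s, [] => List.range' s (m - s)
  | s, (T, J, _) :: P => List.range' s (T - s) ++ J :: (List.range' T (J - T) ++ fseq m (J + 1) P)

section JumpData

variable {m : ℕ} (G : Fin m → PGraph)

def VPair (T J : ℕ) (e : ℤ) : Prop :=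
  T < J ∧ J < m ∧ e ∈ Gext G J ∧
    ∀ c ∈ comp (Gext G J) e, ∀ f ∈ Abelow G T, 1 < (c - f).natAbs

def Valid : ℕ → List (ℕ × ℕ × ℤ) → Prop
  | _, [] => True
  | s, (T, J, e) :: P => s ≤ T ∧ VPair G T J e ∧ Valid (J + 1) P

def gain (P : List (ℕ × ℕ × ℤ)) : ℕ :=
  (P.map fun p => (comp (Gext G p.2.1) p.2.2).card).sum

variable {G}

lemma gain_nil : gain G [] = 0 := rfl

lemma gain_cons (p : ℕ × ℕ × ℤ) (P : List (ℕ × ℕ × ℤ)) :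
    gain G (p :: P) = (comp (Gext G p.2.1) p.2.2).card + gain G P := by
  simp [gain]

lemma gain_append (P : List (ℕ × ℕ × ℤ)) (p : ℕ × ℕ × ℤ) :
    gain G (P ++ [p]) = gain G P + (comp (Gext G p.2.1) p.2.2).card := by
  simp [gain]

lemma valid_append : ∀ (P : List (ℕ × ℕ × ℤ)) (s T J : ℕ) (e : ℤ),
    Valid G s P → (∀ p ∈ P, p.2.1 < T) → s ≤ T → VPair G T J e →
    Valid G s (P ++ [(T, J, e)])
  | [], s, T, J, e => fun _ _ hs hv => ⟨hs, hv, trivial⟩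
  | (T', J', e') :: P, s, T, J, e => fun hval hb hs hv => by
    obtain ⟨h1, h2, h3⟩ := hval
    refine ⟨h1, h2, valid_append P (J' + 1) T J e h3 (fun p hp => hb p (by simp [hp])) ?_ hv⟩
    have := hb (T', J', e') (by simp)
    simpa using this

lemma length_fseq : ∀ (P : List (ℕ × ℕ × ℤ)) (s : ℕ), Valid G s P → s ≤ m →
    (fseq m s P).length = m - s
  | [], s => fun _ _ => by simp [fseq]
  | (T, J, e) :: P, s => fun hval hs => by
    obtain ⟨h1, ⟨hTJ, hJm, _⟩, h3⟩ := hval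
    have ih := length_fseq P (J + 1) h3 (by omega)
    simp only [fseq, List.length_append, List.length_cons, List.length_range', ih]
    omega

lemma range'_split {s T n : ℕ} (h1 : s ≤ T) (h2 : T ≤ n) :
    List.range' s (n - s) = List.range' s (T - s) ++ List.range' T (n - T) := by
  have h := List.range'_append (s := s) (m := T - s) (n := n - T) (step := 1)
  simp only [one_mul, Nat.mul_one] at h
  rw [show s + (T - s) = T by omega] at h
  rw [show (T - s) + (n - T) = n - s by omega] at h
  exact h.symm

lemma range'_split_cons {J n : ℕ} (h : J < n) :
    List.range' J (n - J) = J :: List.range' (J + 1) (n - (J + 1)) := by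
  rw [show n - J = (n - (J + 1)) + 1 by omega]
  rw [List.range'_succ]

lemma fseq_perm : ∀ (P : List (ℕ × ℕ × ℤ)) (s : ℕ), Valid G s P → s ≤ m →
    (fseq m s P).Perm (List.range' s (m - s))
  | [], s => fun _ _ => by simp [fseq]
  | (T, J, e) :: P, s => fun hval hs => by
    obtain ⟨h1, ⟨hTJ, hJm, _⟩, h3⟩ := hval
    have ih := fseq_perm P (J + 1) h3 (by omega)
    have hsplit : List.range' s (m - s) =
        List.range' s (T - s) ++ (List.range' T (J - T) ++ List.range' J (m - J)) := by
      rw [range'_split h1 (by omega : T ≤ m), range'_split (by omega : T ≤ J) (by omega : J ≤ m)]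
    rw [hsplit, range'_split_cons hJm]
    show (List.range' s (T - s) ++ (J :: (List.range' T (J - T) ++ fseq m (J + 1) P))).Perm _
    refine List.Perm.append_left _ ?_
    refine (List.Perm.cons J (List.Perm.append_left _ ih)).trans ?_
    have he1 : (J :: (List.range' T (J - T) ++ List.range' (J + 1) (m - (J + 1)))) =
        ([J] ++ List.range' T (J - T)) ++ List.range' (J + 1) (m - (J + 1)) := by simp
    rw [he1]
    have h4 := List.Perm.append_right (List.range' (J + 1) (m - (J + 1)))
      (List.perm_append_comm (l₁ := [J]) (l₂ := List.range' T (J - T)))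
    have h5 : (List.range' T (J - T) ++ [J]) ++ List.range' (J + 1) (m - (J + 1)) =
        List.range' T (J - T) ++ (J :: List.range' (J + 1) (m - (J + 1))) := by simp
    exact h4.trans (h5 ▸ List.Perm.refl _)
end JumpData
lemma lvecFrom_cons (F x : PGraph) (L : List PGraph) :
    lvecFrom F (x :: L) = lam (ominus x F) + lvecFrom (F ∪ x) L := rfl

section JumpData2

variable {m : ℕ} {G : Fin m → PGraph}

lemma fseq_getElem : ∀ (P : List (ℕ × ℕ × ℤ)) (s : ℕ), Valid G s P → s ≤ m →
    ∀ (p : ℕ) (h : p < (fseq m s P).length), s + p ≤ (fseq m s P)[p] + 1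
  | [], s => fun _ _ p h => by
    simp only [fseq] at h ⊢
    rw [List.getElem_range']
    omega
  | (T, J, e) :: P, s => fun hval hs p h => by
    obtain ⟨h1, ⟨hTJ, hJm, _⟩, h3⟩ := hval
    have ih := fseq_getElem P (J + 1) h3 (by omega)
    have hlenR := length_fseq (G := G) P (J + 1) h3 (by omega)
    have hlt' : p < (List.range' s (T - s) ++ (J :: (List.range' T (J - T) ++ fseq m (J + 1) P))).length := h
    show s + p ≤ (List.range' s (T - s) ++ (J :: (List.range' T (J - T) ++ fseq m (J + 1) P)))[p]'hlt' + 1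
    have hlen : (List.range' s (T - s)).length = T - s := List.length_range'
    by_cases hp : p < T - s
    · rw [List.getElem_append_left (by omega)]
      rw [List.getElem_range']
      omega
    · rw [List.getElem_append_right (by omega)]
      rcases Nat.eq_or_lt_of_le (Nat.le_of_not_lt hp) with heq | hlt
    -- p - (T - s) = 0 case : element J
      · have : p - (List.range' s (T - s)).length = 0 := by omega
        simp only [this, List.getElem_cons_zero]
        omega
      · have hq : p - (List.range' s (T - s)).length = (p - (T - s) - 1) + 1 := by omega
        simp only [hq, List.getElem_cons_succ]
        have hlenB : (List.range' T (J - T)).length = J - T := List.length_range'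
        by_cases hq2 : p - (T - s) - 1 < J - T
        · rw [List.getElem_append_left (by omega)]
          rw [List.getElem_range']
          omega
        · rw [List.getElem_append_right (by omega)]
          simp only [hlenB]
          have := ih (p - (T - s) - 1 - (J - T)) (by
            simp only [fseq] at h ⊢
            simp only [List.length_append, List.length_cons, List.length_range'] at h
            omega)
          omega

lemma unionL_range' : ∀ (n s : ℕ),
    Abelow G s ∪ unionL ((List.range' s n).map (Gext G)) = Abelow G (s + n)
  | 0, s => by simp [unionL]
  | n + 1, s => by
    rw [List.range'_succ]
    show Abelow G s ∪ (Gext G s ∪ unionL ((List.range' (s+1) n).map (Gext G))) = _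
    rw [← Finset.union_assoc, ← Abelow_succ, unionL_range' n (s + 1)]
    congr 1
    omega

lemma fseq_lvec : ∀ (P : List (ℕ × ℕ × ℤ)) (s : ℕ), Valid G s P → s ≤ m →
    gain G P ≤ lvecFrom (Abelow G s) ((fseq m s P).map (Gext G))
  | [], s => fun _ _ => Nat.zero_le _
  | (T, J, e) :: P, s => fun hval hs => by
    obtain ⟨h1, ⟨hTJ, hJm, heJ, hdisj⟩, h3⟩ := hval
    have ih := fseq_lvec P (J + 1) h3 (by omega)
    show gain G ((T, J, e) :: P) ≤ lvecFrom (Abelow G s)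
      ((List.range' s (T - s) ++ (J :: (List.range' T (J - T) ++ fseq m (J + 1) P))).map (Gext G))
    rw [List.map_append, lvecFrom_append]
    have hA : Abelow G s ∪ unionL ((List.range' s (T - s)).map (Gext G)) = Abelow G T := by
      rw [unionL_range']
      congr 1
      omega
    rw [hA, List.map_cons, lvecFrom_cons, List.map_append, lvecFrom_append]
    have hB : Abelow G T ∪ Gext G J ∪ unionL ((List.range' T (J - T)).map (Gext G)) =
        Abelow G (J + 1) := by
      rw [Finset.union_right_comm, unionL_range']
      rw [show T + (J - T) = J by omega, ← Abelow_succ]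
    rw [hB, show gain G ((T, J, e) :: P) = (comp (Gext G J) e).card + gain G P from by simp [gain]]
    have hcard : (comp (Gext G J) e).card ≤ lam (ominus (Gext G J) (Abelow G T)) :=
      card_comp_le_lam_ominus heJ hdisj
    omega

lemma exists_shift_perm (P : List (ℕ × ℕ × ℤ)) (hP : Valid G 0 P) :
    ∃ σ : Equiv.Perm (Fin m), IsShiftPerm σ ∧
      gain G P ≤ lvecFrom ∅ ((List.finRange m).map fun a => G (σ a)) := by
  set l := fseq m 0 P with hl
  have hlen : l.length = m := by
    rw [hl, length_fseq (G := G) P 0 hP (Nat.zero_le m)]; omega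
  have hperm : l.Perm (List.range m) := by
    have := fseq_perm (G := G) P 0 hP (Nat.zero_le m)
    rw [Nat.sub_zero] at this
    rw [List.range_eq_range']
    exact this
  have hnodup : l.Nodup := hperm.nodup_iff.mpr (List.nodup_range (n := m))
  have hmem : ∀ x ∈ l, x < m := fun x hx => List.mem_range.mp (hperm.mem_iff.mp hx)
  have hget : ∀ (p : ℕ) (h : p < m), l[p]'(by omega) < m := fun p h =>
    hmem _ (List.getElem_mem _)
  set g : Fin m → Fin m := fun p => ⟨l[p.val]'(by omega), hget p.val p.isLt⟩ with hg
  have hinj : Function.Injective g := by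
    intro p q hpq
    have : l[p.val]'(by omega) = l[q.val]'(by omega) := congrArg Fin.val hpq
    have := (List.Nodup.getElem_inj_iff hnodup).mp this
    exact Fin.ext this
  have hbij : Function.Bijective g := Finite.injective_iff_bijective.mp hinj
  refine ⟨Equiv.ofBijective g hbij, ?_, ?_⟩
  · intro j
    have := fseq_getElem (G := G) P 0 hP (Nat.zero_le m) j.val (by rw [← hl]; omega)
    simpa using this
  · have hlist : ((List.finRange m).map fun a => G (Equiv.ofBijective g hbij a)) =
        l.map (Gext G) := by
      apply List.ext_getElem
      · simp [hlen]
      · intro p h1 h2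
        simp only [List.getElem_map, List.getElem_finRange]
        simp only [Gext]
        rw [dif_pos (hget p (by simpa using h1))]
        rfl
    rw [hlist]
    have := fseq_lvec (G := G) P 0 hP (Nat.zero_le m)
    rwa [Abelow_zero] at this

end JumpData2
section Descent

variable {m : ℕ} {G : Fin m → PGraph}

def Touch (F C : PGraph) : Prop := ∃ c ∈ C, ∃ f ∈ F, (c - f).natAbs ≤ 1

lemma descent : ∀ (N : ℕ) (j : Fin m) (e : ℤ), (j : ℕ) < N → e ∈ G j →
    (∀ i : Fin m, i < j → e ∉ G i) →
    ∃ (z : ℤ) (P₁ P₂ : List (ℕ × ℕ × ℤ)), z ∈ residUnion G ∧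
      Valid G 0 P₁ ∧ Valid G 0 P₂ ∧
      (∀ p ∈ P₁, p.2.1 ≤ (j : ℕ)) ∧ (∀ p ∈ P₂, p.2.1 < (j : ℕ)) ∧
      (z - e).natAbs ≤ gain G P₁ + gain G P₂ := by
  intro N
  induction N with
  | zero => exact fun j e h => absurd h (by omega)
  | succ N IH =>
    intro j e hjN he hmin
    by_cases hT : Touch (Abelow G (j : ℕ)) (comp (G j) e)
    · -- non-terminal
      classical
      set S : Finset (Fin m) :=
        Finset.univ.filter (fun i => i < j ∧ Touch (G i) (comp (G j) e)) with hS
      have hSne : S.Nonempty := by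
        obtain ⟨c, hc, f, hf, hcf⟩ := hT
        obtain ⟨i, hi, hfi⟩ := mem_Abelow.mp hf
        exact ⟨i, by
          rw [hS, Finset.mem_filter]
          exact ⟨Finset.mem_univ _, Fin.lt_def.mpr hi, c, hc, f, hfi, hcf⟩⟩
      set t := S.min' hSne with ht
      have htS : t ∈ S := Finset.min'_mem _ _
      rw [hS, Finset.mem_filter] at htS
      obtain ⟨-, htj, c, hc, f, hf, hcf⟩ := htS
      have htmin : ∀ i : Fin m, i < t → ¬(i < j ∧ Touch (G i) (comp (G j) e)) := by
        intro i hit hcon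
        have : t ≤ i := Finset.min'_le _ _ (by
          rw [hS, Finset.mem_filter]; exact ⟨Finset.mem_univ _, hcon⟩)
        exact absurd hit (by omega)
      have hfmin : ∀ i : Fin m, i < t → f ∉ G i := by
        intro i hit hfi
        exact htmin i hit ⟨lt_trans hit htj, c, hc, f, hfi, hcf⟩
      obtain ⟨z, Q₁, Q₂, hzH, hQ₁v, hQ₂v, hQ₁b, hQ₂b, hbd⟩ :=
        IH t f (by have := Fin.lt_def.mp htj; omega) hf hfmin
      -- new pair
      have hVP : VPair G (t : ℕ) (j : ℕ) e := by
        refine ⟨Fin.lt_def.mp htj, j.isLt, by rw [Gext_eq]; exact he, ?_⟩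
        rw [Gext_eq]
        intro c' hc' f' hf'
        obtain ⟨i, hi, hfi⟩ := mem_Abelow.mp hf'
        by_contra hcon
        push_neg at hcon
        exact htmin i (Fin.lt_def.mpr hi) ⟨lt_trans (Fin.lt_def.mpr hi) htj,
          c', hc', f', hfi, by omega⟩
      set P₁ := Q₂ ++ [((t : ℕ), (j : ℕ), e)] with hP₁
      have hP₁v : Valid G 0 P₁ :=
        valid_append Q₂ 0 (t : ℕ) (j : ℕ) e hQ₂v (fun p hp => hQ₂b p hp) (Nat.zero_le _) hVP
      have hg₁ : gain G P₁ = gain G Q₂ + (comp (Gext G (j : ℕ)) e).card := gain_append _ _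
      have hcompcard : (e - f).natAbs ≤ (comp (G j) e).card := by
        have h1 := dist_le_of_mem_comp (mem_comp_self he) hc
        omega
      by_cases hcmp : gain G Q₂ ≤ gain G Q₁
      · refine ⟨z, P₁, Q₁, hzH, hP₁v, hQ₁v, ?_, ?_, ?_⟩
        · intro p hp
          rw [hP₁] at hp
          rcases List.mem_append.mp hp with h | h
          · have := hQ₂b p h
            have := Fin.lt_def.mp htj
            omega
          · simp at h
            rw [h]
        · intro p hp
          have := hQ₁b p hp
          have := Fin.lt_def.mp htj
          omega
        · have : (z - e).natAbs ≤ (z - f).natAbs + (e - f).natAbs := by omega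
          rw [hg₁, Gext_eq]
          omega
      · refine ⟨z, P₁, Q₂, hzH, hP₁v, hQ₂v, ?_, ?_, ?_⟩
        · intro p hp
          rw [hP₁] at hp
          rcases List.mem_append.mp hp with h | h
          · have := hQ₂b p h
            have := Fin.lt_def.mp htj
            omega
          · simp at h
            rw [h]
        · intro p hp
          have := hQ₂b p hp
          have := Fin.lt_def.mp htj
          omega
        · have : (z - e).natAbs ≤ (z - f).natAbs + (e - f).natAbs := by omega
          rw [hg₁, Gext_eq]
          omega
    · -- terminal
      refine ⟨e, [], [], ?_, trivial, trivial, by simp, by simp, by simp [gain_nil]⟩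
      rw [mem_residUnion]
      refine ⟨j, mem_ominus.mpr ⟨he, ?_⟩⟩
      intro c' hc' f' hf'
      rw [unionBelow_eq] at hf'
      by_contra hcon
      push_neg at hcon
      exact hT ⟨c', hc', f', hf', by omega⟩

end Descent

/-- **Lemma 5.10.**  Let `G_1 ∪ ⋯ ∪ G_m = Path_k` and `g := gap(G_1,…,G_m)`.  Then there is a
shift permutation `σ` with `λ⃗(G_{σ(1)},…,G_{σ(m)}) ≥ (g − max_j λ(G_j))/2`. -/
theorem gap_shift_lemma (k m : ℕ) (hk : 1 ≤ k) (G : Fin m → PGraph)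
    (hcov : Finset.univ.biUnion G = pathk k) :
    ∃ σ : Equiv.Perm (Fin m), IsShiftPerm σ ∧
      (gapSeq k G - (((Finset.univ.sup fun j => lam (G j)) : ℕ) : ℝ)) / 2 ≤
        (lvec (seqList fun a => G (σ a)) : ℝ) := by
  classical
  set L : ℕ := Finset.univ.sup fun j => lam (G j) with hLdef
  set F : Equiv.Perm (Fin m) → ℕ := fun σ => lvec (seqList fun a => G (σ a)) with hFdef
  have h1SP : IsShiftPerm (1 : Equiv.Perm (Fin m)) := fun j => by simp
  set SP := Finset.univ.filter (fun σ : Equiv.Perm (Fin m) => IsShiftPerm σ) with hSPdef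
  have hSPne : SP.Nonempty :=
    ⟨1, by rw [hSPdef, Finset.mem_filter]; exact ⟨Finset.mem_univ _, h1SP⟩⟩
  obtain ⟨σ₀, hσ₀mem, hσ₀⟩ := Finset.exists_mem_eq_sup' hSPne F
  set M := SP.sup' hSPne F with hMdef
  refine ⟨σ₀, (Finset.mem_filter.mp hσ₀mem).2, ?_⟩
  have key : gapSeq k G ≤ (L : ℝ) + 2 * (M : ℝ) := by
    rw [gapSeq, gapOf]
    have hkpos : (0:ℝ) ≤ (k:ℝ) := by positivity
    haveI : Nonempty (Set.Icc (0:ℝ) (k:ℝ)) := ⟨⟨0, le_refl _, hkpos⟩⟩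
    apply ciSup_le
    rintro ⟨y, hy0, hyk⟩
    -- the edge nearest y
    set n : ℤ := max 1 ⌈y⌉ with hn
    have hn1 : (1:ℤ) ≤ n := le_max_left _ _
    have hnk : n ≤ (k : ℤ) := by
      apply max_le (by exact_mod_cast hk)
      exact Int.ceil_le.mpr (by exact_mod_cast hyk)
    have hyn : y ≤ (n:ℝ) := by
      refine le_trans (Int.le_ceil y) ?_
      exact_mod_cast le_max_right 1 ⌈y⌉
    have hny : (n:ℝ) - 1 ≤ y := by
      rcases max_cases 1 ⌈y⌉ with ⟨hmx, hle⟩ | ⟨hmx, hlt⟩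
      · rw [hn, hmx]
        have : (⌈y⌉ : ℝ) ≤ 1 := by exact_mod_cast hle
        have := Int.le_ceil y
        norm_num
        linarith [Int.ceil_lt_add_one y]
      · rw [hn, hmx]
        linarith [Int.ceil_lt_add_one y]
    have hnpath : n ∈ pathk k := Finset.mem_Icc.mpr ⟨hn1, hnk⟩
    have hncov : n ∈ Finset.univ.biUnion G := by rw [hcov]; exact hnpath
    obtain ⟨j₁, -, hj₁⟩ := Finset.mem_biUnion.mp hncov
    set T : Finset (Fin m) := Finset.univ.filter (fun j => n ∈ G j) with hTdef
    have hTne : T.Nonempty :=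
      ⟨j₁, by rw [hTdef, Finset.mem_filter]; exact ⟨Finset.mem_univ _, hj₁⟩⟩
    set j := T.min' hTne with hj
    have hjT : j ∈ T := Finset.min'_mem _ _
    have hjG : n ∈ G j := (Finset.mem_filter.mp hjT).2
    have hjmin : ∀ i : Fin m, i < j → n ∉ G i := by
      intro i hij hni
      have : j ≤ i := Finset.min'_le _ _ (by
        rw [hTdef, Finset.mem_filter]; exact ⟨Finset.mem_univ _, hni⟩)
      exact absurd hij (by exact not_lt_of_ge this)
    obtain ⟨z, P₁, P₂, hzH, hP₁v, hP₂v, -, -, hbd⟩ :=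
      descent (G := G) m j n j.isLt hjG hjmin
    -- the better jump list
    have hbetter : ∃ σ ∈ SP, gain G P₁ + gain G P₂ ≤ 2 * F σ := by
      rcases le_total (gain G P₁) (gain G P₂) with hc | hc
      · obtain ⟨σ, hσs, hσg⟩ := exists_shift_perm P₂ hP₂v
        refine ⟨σ, by rw [hSPdef, Finset.mem_filter]; exact ⟨Finset.mem_univ _, hσs⟩, ?_⟩
        have : gain G P₂ ≤ F σ := hσg
        omega
      · obtain ⟨σ, hσs, hσg⟩ := exists_shift_perm P₁ hP₁v
        refine ⟨σ, by rw [hSPdef, Finset.mem_filter]; exact ⟨Finset.mem_univ _, hσs⟩, ?_⟩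
        have : gain G P₁ ≤ F σ := hσg
        omega
    obtain ⟨σy, hσymem, hσy⟩ := hbetter
    have hz2M : (z - n).natAbs ≤ 2 * M := by
      have h1 : F σy ≤ M := Finset.le_sup' F hσymem
      omega
    -- bound the sInf term
    have hzH' : z ∈ residUnion G := hzH
    have hCne : (comp (residUnion G) z).Nonempty := comp_nonempty hzH'
    set a := (comp (residUnion G) z).min' hCne with ha
    set b := (comp (residUnion G) z).max' hCne with hb
    have hmidpt : midpt (residUnion G) z = (((a:ℝ) - 1) + (b:ℝ)) / 2 := by
      rw [midpt, ← Finset.coe_min' hCne, ← Finset.coe_max' hCne]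
      rw [WithTop.untopD_coe, WithBot.unbotD_coe]
    have hazb : a ≤ z ∧ z ≤ b :=
      ⟨Finset.min'_le _ _ (mem_comp_self hzH'), Finset.le_max' _ _ (mem_comp_self hzH')⟩
    have hcard : b + 1 - a ≤ (L : ℤ) := by
      have h1 : (comp (residUnion G) z).card ≤ L := card_comp_residUnion_le hzH'
      rw [comp_eq_Icc hzH'] at h1
      rw [Int.card_Icc] at h1
      omega
    have habs : |(z:ℝ) - (n:ℝ)| ≤ 2 * (M:ℝ) := by
      have h1 : |z - n| ≤ ((2 * M : ℕ) : ℤ) := by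
        rw [Int.abs_eq_natAbs]
        exact_mod_cast hz2M
      calc |(z:ℝ) - (n:ℝ)| = |((z - n : ℤ) : ℝ)| := by push_cast; ring_nf
        _ = ((|z - n| : ℤ) : ℝ) := by rw [Int.cast_abs]
        _ ≤ (((2 * M : ℕ) : ℤ) : ℝ) := by exact_mod_cast h1
        _ = 2 * (M:ℝ) := by push_cast; ring
    have hInf : sInf ((fun i => |midpt (residUnion G) i - y|) '' ((residUnion G : Finset ℤ) : Set ℤ))
        ≤ |midpt (residUnion G) z - y| := by
      apply csInf_le
      · refine ⟨0, ?_⟩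
        rintro r ⟨i, -, rfl⟩
        exact abs_nonneg _
      · exact ⟨z, Finset.mem_coe.mpr hzH', rfl⟩
    refine le_trans (le_trans le_rfl hInf) ?_
    rw [hmidpt]
    have haz : (a:ℝ) ≤ (z:ℝ) := by exact_mod_cast hazb.1
    have hzb : (z:ℝ) ≤ (b:ℝ) := by exact_mod_cast hazb.2
    have hba : (b:ℝ) + 1 - (a:ℝ) ≤ (L:ℝ) := by exact_mod_cast hcard
    have hL0 : (0:ℝ) ≤ (L:ℝ) := by positivity
    have habs2 := abs_le.mp habs
    rw [abs_le]
    constructor <;> [skip; skip] <;> nlinarith [habs2.1, habs2.2]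
  have hFM : ((F σ₀ : ℕ) : ℝ) = ((M : ℕ) : ℝ) := by rw [hσ₀]
  have : (lvec (seqList fun a => G (σ₀ a)) : ℝ) = (F σ₀ : ℝ) := rfl
  rw [this, hFM]
  linarith
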